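/- Let 𝕋 be a pretheory and suppose the morphism equality f ≡ g : X → Y is derivable, where Y = (y₁:Y₁,…,yₙ:Yₙ). Then: (1) the judgment X ⊢ Yᵢ[f] ≡ Yᵢ[g] sort is derivable for each 1 ≤ i ≤ n; (2) f : X → Y and g : X → Y are context morphisms; (3) if moreover Y ⊢ U sort is derivable then X ⊢ U[f] ≡ U[g] sort is derivable; (4) if moreover Y ⊢ u : U is derivable then X ⊢ u[f] ≡ u[g] : U[f] is derivable; (5) if moreover h : Y → Z is a context morphism then the morphism equality h∘f ≡ h∘g : X → Z is derivable. -/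

import Mathlib

set_option linter.unusedVariables false

/-! # Syntax of generalized algebraic theories (following Cartmell / the paper's appendix) -/

namespace GATPaper

/-- A sort-and-term alphabet: a countably infinite set of variables, a set of sort
symbols and a set of term symbols. -/
structure Alphabet : Type 1 where
  Var : Type
  SortSym : Type
  TermSym : Type
  var_infinite : Infinite Var
  var_countable : Countable Var

attribute [instance] Alphabet.var_infinite Alphabet.var_countable

variable {A B : Alphabet}

/-- Term expressions over an alphabet. -/
inductive Expr (A : Alphabet) : Type where
  | var : A.Var → Expr A
  | app : A.TermSym → List (Expr A) → Expr A

/-- Sort expressions: a sort symbol applied to a list of term expressions. -/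
structure SortE (A : Alphabet) : Type where
  head : A.SortSym
  args : List (Expr A)

/-- Occurrence of a variable in a term expression. -/
inductive Occurs (x : A.Var) : Expr A → Prop where
  | var : Occurs x (Expr.var x)
  | app {t : A.TermSym} {es : List (Expr A)} {e : Expr A} :
      e ∈ es → Occurs x e → Occurs x (Expr.app t es)

/-- Occurrence of a variable in a sort expression. -/
def SOccurs (x : A.Var) (U : SortE A) : Prop := ∃ e ∈ U.args, Occurs x e

/-- Simultaneous substitution along a function on variables. -/
def Expr.subst (σ : A.Var → Expr A) : Expr A → Expr A
  | .var x => σ x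
  | .app t es => .app t (es.attach.map fun e => Expr.subst σ e.1)
termination_by e => sizeOf e
decreasing_by
  have := List.sizeOf_lt_of_mem e.2
  simp only [Expr.app.sizeOf_spec]
  omega

def SortE.subst (σ : A.Var → Expr A) (U : SortE A) : SortE A :=
  ⟨U.head, U.args.map (Expr.subst σ)⟩

open Classical in
/-- The function on variables determined by a finite list of substitution pairs
`(zᵢ, uᵢ)` (substituting `uᵢ` for `zᵢ`, first matching pair winning, all other
variables unchanged). -/
noncomputable def lookupV : List (A.Var × Expr A) → A.Var → Expr A
  | [], x => .var x
  | p :: ps, x => if p.1 = x then p.2 else lookupV ps x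

/-- The simultaneous substitution `e[u₁ | z₁, …, u_k | z_k]` where
`ps = [(z₁,u₁),…,(z_k,u_k)]`. -/
noncomputable def Expr.substL (e : Expr A) (ps : List (A.Var × Expr A)) : Expr A :=
  e.subst (lookupV ps)

noncomputable def SortE.substL (U : SortE A) (ps : List (A.Var × Expr A)) : SortE A :=
  U.subst (lookupV ps)

/-- A (pre)context is a finite list of (variable, sort expression) pairs. -/
abbrev PreCtx (A : Alphabet) := List (A.Var × SortE A)

/-- The list of variables of a precontext, as term expressions. -/
def ctxVars (X : PreCtx A) : List (Expr A) := X.map fun p => Expr.var p.1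

/-- The scoping condition of a precontext: the `i`-th sort expression only contains
variables among the first `i` variables. -/
def IsPreCtx (X : PreCtx A) : Prop :=
  ∀ i (hi : i < X.length) (v : A.Var),
    SOccurs v (X[i]'hi).2 → v ∈ (X.take i).map Prod.fst

/-- Substitution pairs sending the variables of `X` to the entries of `f`. -/
def mkSub (X : PreCtx A) (f : List (Expr A)) : List (A.Var × Expr A) :=
  (X.map Prod.fst).zip f

/-- `Xᵢ[f₁ | x₁, …, f_{i-1} | x_{i-1}]` (0-based: the `i`-th sort of `X`
substituted along the first `i` entries of `f`). -/
noncomputable def subPre (X : PreCtx A) (f : List (Expr A)) (i : ℕ) (hi : i < X.length) :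
    SortE A :=
  ((X[i]'hi).2).substL (mkSub (X.take i) (f.take i))

/-- Judgments: context judgments and the four kinds of standard judgments. -/
inductive Judg (A : Alphabet) : Type where
  | ctx (X : PreCtx A)
  | sort (X : PreCtx A) (U : SortE A)
  | term (X : PreCtx A) (u : Expr A) (U : SortE A)
  | sortEq (X : PreCtx A) (U V : SortE A)
  | termEq (X : PreCtx A) (u v : Expr A) (U : SortE A)

/-- The context of a judgment. -/
def Judg.ctxOf : Judg A → PreCtx A
  | .ctx X => X
  | .sort X _ => X
  | .term X _ _ => X
  | .sortEq X _ _ => X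
  | .termEq X _ _ _ => X

/-- The judgment introducing a sort symbol over the context `X`. -/
def introSort (X : PreCtx A) (S : A.SortSym) : Judg A := .sort X ⟨S, ctxVars X⟩

/-- The judgment introducing a term symbol over the context `X`, with sort `U`. -/
def introTerm (X : PreCtx A) (t : A.TermSym) (U : SortE A) : Judg A :=
  .term X (.app t (ctxVars X)) U

/-- A set of axioms is a pretheory if: no axiom is a context judgment, every
axiom's context is a precontext, every sort symbol has a unique introducing sort
axiom and there are no other sort axioms, and likewise for term symbols. -/
structure IsPretheory (Ax : Set (Judg A)) : Prop where
  no_ctx : ∀ X : PreCtx A, Judg.ctx X ∉ Ax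
  wf_ctx : ∀ J ∈ Ax, IsPreCtx J.ctxOf
  sort_intro : ∀ S : A.SortSym, ∃! X : PreCtx A, introSort X S ∈ Ax
  sort_shape : ∀ (X : PreCtx A) (U : SortE A), Judg.sort X U ∈ Ax → U.args = ctxVars X
  term_intro : ∀ t : A.TermSym, ∃! p : PreCtx A × SortE A, introTerm p.1 t p.2 ∈ Ax
  term_shape : ∀ (X : PreCtx A) (u : Expr A) (U : SortE A), Judg.term X u U ∈ Ax →
      ∃ t : A.TermSym, u = Expr.app t (ctxVars X)

/-- One inference step of the paper's system: `Step Ax D J` holds when `J` is the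
conclusion of an instance of one of the sixteen rules all of whose premises
satisfy `D`. -/
inductive Step (Ax : Set (Judg A)) (D : Judg A → Prop) : Judg A → Prop where
  | ctx_nil : Step Ax D (.ctx [])
  | ctx_cons {X : PreCtx A} {U : SortE A} {x : A.Var}
      (hs : D (.sort X U)) (hfresh : ∀ p ∈ X, p.1 ≠ x)
      (hpre : IsPreCtx (X ++ [(x, U)])) :
      Step Ax D (.ctx (X ++ [(x, U)]))
  | s1 {X : PreCtx A} {U : SortE A} (h : D (.sort X U)) : Step Ax D (.sortEq X U U)
  | s2 {X : PreCtx A} {U V : SortE A} (h : D (.sortEq X U V)) : Step Ax D (.sortEq X V U)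
  | s3 {X : PreCtx A} {U V W : SortE A}
      (h1 : D (.sortEq X U V)) (h2 : D (.sortEq X V W)) : Step Ax D (.sortEq X U W)
  | t1 {X : PreCtx A} {u : Expr A} {U : SortE A}
      (h : D (.term X u U)) : Step Ax D (.termEq X u u U)
  | t2 {X : PreCtx A} {u v : Expr A} {U : SortE A}
      (h : D (.termEq X u v U)) : Step Ax D (.termEq X v u U)
  | t3 {X : PreCtx A} {u v w : Expr A} {U : SortE A}
      (h1 : D (.termEq X u v U)) (h2 : D (.termEq X v w U)) : Step Ax D (.termEq X u w U)
  | seqt {X : PreCtx A} {U U' : SortE A} {u : Expr A}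
      (h1 : D (.sortEq X U U')) (h2 : D (.term X u U)) : Step Ax D (.term X u U')
  | seqteq {X : PreCtx A} {U U' : SortE A} {u u' : Expr A}
      (h1 : D (.sortEq X U U')) (h2 : D (.termEq X u u' U))
      (h3 : D (.term X u U')) (h4 : D (.term X u' U')) : Step Ax D (.termEq X u u' U')
  | var {X : PreCtx A} {i : ℕ} (hi : i < X.length)
      (h : D (.sort X (X[i]'hi).2)) :
      Step Ax D (.term X (.var (X[i]'hi).1) (X[i]'hi).2)
  | sA {X : PreCtx A} {U : SortE A} (hax : Judg.sort X U ∈ Ax) (h : D (.ctx X))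
      (hv : ∀ i (hi : i < X.length), D (.term X (.var (X[i]'hi).1) (X[i]'hi).2)) :
      Step Ax D (.sort X U)
  | tA {X : PreCtx A} {u : Expr A} {U : SortE A} (hax : Judg.term X u U ∈ Ax)
      (h : D (.sort X U))
      (hv : ∀ i (hi : i < X.length), D (.term X (.var (X[i]'hi).1) (X[i]'hi).2)) :
      Step Ax D (.term X u U)
  | seqA {X : PreCtx A} {U U' : SortE A} (hax : Judg.sortEq X U U' ∈ Ax)
      (h1 : D (.sort X U)) (h2 : D (.sort X U')) : Step Ax D (.sortEq X U U')
  | teqA {X : PreCtx A} {u u' : Expr A} {U : SortE A} (hax : Judg.termEq X u u' U ∈ Ax)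
      (h1 : D (.term X u U)) (h2 : D (.term X u' U)) : Step Ax D (.termEq X u u' U)
  | sSub {X : PreCtx A} {S : A.SortSym} (hax : introSort X S ∈ Ax)
      {Y : PreCtx A} (hY : IsPreCtx Y) {f : List (Expr A)} (hlen : f.length = X.length)
      (hJ : D (introSort X S)) (hYc : D (.ctx Y))
      (hargs : ∀ i (hi : i < X.length) (hif : i < f.length),
        D (.term Y (f[i]'hif) (subPre X f i hi))) :
      Step Ax D (.sort Y ⟨S, f⟩)
  | tSub {X : PreCtx A} {t : A.TermSym} {U : SortE A} (hax : introTerm X t U ∈ Ax)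
      {Y : PreCtx A} (hY : IsPreCtx Y) {f : List (Expr A)} (hlen : f.length = X.length)
      (hJ : D (introTerm X t U))
      (hU : D (.sort Y (U.substL (mkSub X f))))
      (hargs : ∀ i (hi : i < X.length) (hif : i < f.length),
        D (.term Y (f[i]'hif) (subPre X f i hi))) :
      Step Ax D (.term Y (.app t f) (U.substL (mkSub X f)))
  | seqSub1 {X : PreCtx A} {U U' : SortE A} (hax : Judg.sortEq X U U' ∈ Ax)
      {Y : PreCtx A} (hY : IsPreCtx Y) {f : List (Expr A)} (hlen : f.length = X.length)
      (hJ : D (.sortEq X U U'))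
      (h1 : D (.sort Y (U.substL (mkSub X f)))) (h2 : D (.sort Y (U'.substL (mkSub X f))))
      (hargs : ∀ i (hi : i < X.length) (hif : i < f.length),
        D (.term Y (f[i]'hif) (subPre X f i hi))) :
      Step Ax D (.sortEq Y (U.substL (mkSub X f)) (U'.substL (mkSub X f)))
  | seqSub2 {X : PreCtx A} {S : A.SortSym} (hax : introSort X S ∈ Ax)
      {Y : PreCtx A} (hY : IsPreCtx Y) {f g : List (Expr A)}
      (hlf : f.length = X.length) (hlg : g.length = X.length)
      (hJ : D (introSort X S))
      (h1 : D (.sort Y ⟨S, f⟩)) (h2 : D (.sort Y ⟨S, g⟩))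
      (hargs : ∀ i (hi : i < X.length) (hif : i < f.length) (hig : i < g.length),
        D (.termEq Y (f[i]'hif) (g[i]'hig) (subPre X f i hi))) :
      Step Ax D (.sortEq Y ⟨S, f⟩ ⟨S, g⟩)
  | teqSub1 {X : PreCtx A} {u u' : Expr A} {U : SortE A}
      (hax : Judg.termEq X u u' U ∈ Ax)
      {Y : PreCtx A} (hY : IsPreCtx Y) {f : List (Expr A)} (hlen : f.length = X.length)
      (hJ : D (.termEq X u u' U))
      (h1 : D (.term Y (u.substL (mkSub X f)) (U.substL (mkSub X f))))
      (h2 : D (.term Y (u'.substL (mkSub X f)) (U.substL (mkSub X f))))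
      (hargs : ∀ i (hi : i < X.length) (hif : i < f.length),
        D (.term Y (f[i]'hif) (subPre X f i hi))) :
      Step Ax D (.termEq Y (u.substL (mkSub X f)) (u'.substL (mkSub X f))
        (U.substL (mkSub X f)))
  | teqSub2 {X : PreCtx A} {t : A.TermSym} {U : SortE A} (hax : introTerm X t U ∈ Ax)
      {Y : PreCtx A} (hY : IsPreCtx Y) {f g : List (Expr A)}
      (hlf : f.length = X.length) (hlg : g.length = X.length)
      (hJ : D (introTerm X t U))
      (h1 : D (.term Y (.app t f) (U.substL (mkSub X f))))
      (h2 : D (.term Y (.app t g) (U.substL (mkSub X f))))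
      (hargs : ∀ i (hi : i < X.length) (hif : i < f.length) (hig : i < g.length),
        D (.termEq Y (f[i]'hif) (g[i]'hig) (subPre X f i hi))) :
      Step Ax D (.termEq Y (.app t f) (.app t g) (U.substL (mkSub X f)))

/-- `DerAt Ax n J`: `J` is the conclusion of an inference step in the `n`-th stage
`𝒟ₙ` of the recursive construction of the derivable judgments. -/
def DerAt (Ax : Set (Judg A)) : ℕ → Judg A → Prop
  | 0, _ => False
  | n + 1, J => DerAt Ax n J ∨ Step Ax (DerAt Ax n) J

/-- A judgment is derivable if it is the conclusion of a step of some stage. -/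
def Derivable (Ax : Set (Judg A)) (J : Judg A) : Prop := ∃ n, DerAt Ax n J

/-- The height of a (derivable) judgment: the least stage at which it appears. -/
noncomputable def ht (Ax : Set (Judg A)) (J : Judg A) : ℕ := sInf {n | DerAt Ax n J}

/-- The height of a context: `0` for the empty context, and the height of
`∂X ⊢ Xₙ sort` otherwise. -/
noncomputable def htCtx (Ax : Set (Judg A)) (X : PreCtx A) : ℕ :=
  match X with
  | [] => 0
  | p :: X' =>
      ht Ax (.sort ((p :: X').dropLast) (((p :: X').getLast (List.cons_ne_nil p X')).2))

/-- A generalized algebraic theory: a pretheory all of whose axioms are derivable. -/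
def IsGAT (Ax : Set (Judg A)) : Prop := IsPretheory Ax ∧ ∀ J ∈ Ax, Derivable Ax J

/-- The partial term judgment `X ⊢ u term` is derivable. -/
def DerTerm (Ax : Set (Judg A)) (X : PreCtx A) (u : Expr A) : Prop :=
  ∃ U, Derivable Ax (.term X u U)

/-- The partial term equality judgment `X ⊢ u ≡ v term` is derivable. -/
def DerTermEq (Ax : Set (Judg A)) (X : PreCtx A) (u v : Expr A) : Prop :=
  ∃ U, Derivable Ax (.termEq X u v U)

/-- Height of a derivable partial term judgment: the minimum of the heights of
`X ⊢ u : U` over all `U`. -/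
noncomputable def htTerm (Ax : Set (Judg A)) (X : PreCtx A) (u : Expr A) : ℕ :=
  sInf {n | ∃ U, DerAt Ax n (.term X u U)}

/-- `f` is a context morphism from `X` to `Y`. -/
def IsMor (Ax : Set (Judg A)) (X Y : PreCtx A) (f : List (Expr A)) : Prop :=
  Derivable Ax (.ctx X) ∧ Derivable Ax (.ctx Y) ∧ f.length = Y.length ∧
  ∀ i (hi : i < Y.length) (hif : i < f.length),
    Derivable Ax (.term X (f[i]'hif) (subPre Y f i hi))

/-- The morphism equality `f ≡ g : X → Y` is derivable. -/
def MorEq (Ax : Set (Judg A)) (X Y : PreCtx A) (f g : List (Expr A)) : Prop :=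
  IsMor Ax X Y f ∧ IsMor Ax X Y g ∧
  ∀ i (hi : i < Y.length) (hif : i < f.length) (hig : i < g.length),
    Derivable Ax (.termEq X (f[i]'hif) (g[i]'hig) (subPre Y f i hi))

/-- The context equality `X ≡ Y ctx` is derivable. -/
def CtxEq (Ax : Set (Judg A)) (X Y : PreCtx A) : Prop :=
  X.length = Y.length ∧ Derivable Ax (.ctx X) ∧ Derivable Ax (.ctx Y) ∧
  ∀ i (hX : i < X.length) (hY : i < Y.length),
    Derivable Ax (.sortEq (X.take i) (X[i]'hX).2
      (((Y[i]'hY).2).substL (mkSub (Y.take i) (ctxVars (X.take i)))))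

/-- Height of a context morphism. -/
noncomputable def htMor (Ax : Set (Judg A)) (X Y : PreCtx A) (f : List (Expr A)) : ℕ :=
  max (htCtx Ax X) (max (htCtx Ax Y)
    ((Finset.range Y.length).sup fun i =>
      if h : i < Y.length ∧ i < f.length then
        ht Ax (.term X (f[i]'h.2) (subPre Y f i h.1))
      else 0))

/-- Height of a morphism equality. -/
noncomputable def htMorEq (Ax : Set (Judg A)) (X Y : PreCtx A) (f g : List (Expr A)) : ℕ :=
  max (htMor Ax X Y f) (max (htMor Ax X Y g)
    ((Finset.range Y.length).sup fun i =>
      if h : i < Y.length ∧ i < f.length ∧ i < g.length then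
        ht Ax (.termEq X (f[i]'h.2.1) (g[i]'h.2.2) (subPre Y f i h.1))
      else 0))

/-- The composite `g ∘ f` of tuples of term expressions, where `f : X → Y` and
`g : Y → Z`: the `i`-th entry is `gᵢ[f]`. -/
noncomputable def compMor (Y : PreCtx A) (f g : List (Expr A)) : List (Expr A) :=
  g.map fun e => e.substL (mkSub Y f)

/-- The canonical sort `𝒮(u)` of a term in a context (as a relation). -/
inductive CanonSort (Ax : Set (Judg A)) (X : PreCtx A) : Expr A → SortE A → Prop where
  | var {i : ℕ} (hi : i < X.length) : CanonSort Ax X (.var (X[i]'hi).1) (X[i]'hi).2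
  | app {t : A.TermSym} {f : List (Expr A)} {Xa : PreCtx A} {V : SortE A}
      (hax : introTerm Xa t V ∈ Ax) :
      CanonSort Ax X (.app t f) (V.substL (mkSub Xa f))
/-- Custom induction principle for `Expr`. -/
theorem Expr.induct {motive : Expr A → Prop}
    (hv : ∀ x, motive (.var x))
    (ha : ∀ t es, (∀ e ∈ es, motive e) → motive (.app t es)) : ∀ e, motive e := by
  have key : ∀ n (e : Expr A), sizeOf e ≤ n → motive e := by
    intro n
    induction n with
    | zero => intro e he; cases e <;> simp at he
    | succ n ih =>
      intro e he
      cases e with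
      | var x => exact hv x
      | app t es =>
        refine ha t es fun e' he' => ih e' ?_
        have := List.sizeOf_lt_of_mem he'
        simp only [Expr.app.sizeOf_spec] at he
        omega
  exact fun e => key (sizeOf e) e le_rfl

@[simp] theorem Expr.subst_var (σ : A.Var → Expr A) (x : A.Var) :
    Expr.subst σ (.var x) = σ x := by
  rw [Expr.subst]

@[simp] theorem Expr.subst_app (σ : A.Var → Expr A) (t : A.TermSym) (es : List (Expr A)) :
    Expr.subst σ (.app t es) = .app t (es.map (Expr.subst σ)) := by
  rw [Expr.subst]
  simp [List.map_subtype]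

theorem Expr.subst_congr {σ τ : A.Var → Expr A} :
    ∀ e : Expr A, (∀ v, Occurs v e → σ v = τ v) → e.subst σ = e.subst τ := by
  refine Expr.induct (fun x h => ?_) (fun t es ih h => ?_)
  · simpa using h x .var
  · simp only [Expr.subst_app, Expr.app.injEq, true_and]
    exact List.map_congr_left fun e he => ih e he fun v hv => h v (.app he hv)

theorem Expr.subst_subst (σ τ : A.Var → Expr A) :
    ∀ e : Expr A, (e.subst σ).subst τ = e.subst (fun x => (σ x).subst τ) := by
  refine Expr.induct (fun x => by simp) (fun t es ih => ?_)
  simp only [Expr.subst_app, List.map_map, Expr.app.injEq, true_and]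
  exact List.map_congr_left fun e he => ih e he

theorem SortE.subst_congr {σ τ : A.Var → Expr A} (U : SortE A)
    (h : ∀ v, SOccurs v U → σ v = τ v) : U.subst σ = U.subst τ := by
  unfold SortE.subst
  refine congrArg _ (List.map_congr_left fun e he => Expr.subst_congr e fun v hv => ?_)
  exact h v ⟨e, he, hv⟩

theorem SortE.subst_subst (σ τ : A.Var → Expr A) (U : SortE A) :
    (U.subst σ).subst τ = U.subst (fun x => (σ x).subst τ) := by
  unfold SortE.subst
  simp [List.map_map, Function.comp_def, Expr.subst_subst]

/-- lookup lemmas -/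
theorem lookupV_not_mem {ps : List (A.Var × Expr A)} {v : A.Var}
    (h : v ∉ ps.map Prod.fst) : lookupV ps v = .var v := by
  induction ps with
  | nil => rfl
  | cons p ps ih =>
    simp only [List.map_cons, List.mem_cons, not_or] at h
    rw [lookupV, if_neg (fun hh => h.1 hh.symm), ih h.2]

theorem lookupV_append {ps qs : List (A.Var × Expr A)} {v : A.Var}
    (h : v ∈ ps.map Prod.fst) : lookupV (ps ++ qs) v = lookupV ps v := by
  induction ps with
  | nil => simp at h
  | cons p ps ih =>
    by_cases hp : p.1 = v
    · simp [lookupV, hp]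
    · simp only [List.map_cons, List.mem_cons] at h
      rcases h with h | h
      · exact absurd h.symm hp
      · simp only [List.cons_append, lookupV, if_neg hp]
        exact ih h

theorem lookupV_take {ps : List (A.Var × Expr A)} {i : ℕ} {v : A.Var}
    (h : v ∈ (ps.take i).map Prod.fst) : lookupV ps v = lookupV (ps.take i) v := by
  conv_lhs => rw [← List.take_append_drop i ps]
  exact lookupV_append h

theorem lookupV_map (h : Expr A → Expr A) (ps : List (A.Var × Expr A)) (v : A.Var)
    (hv : v ∈ ps.map Prod.fst) :
    lookupV (ps.map fun p => (p.1, h p.2)) v = h (lookupV ps v) := by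
  induction ps with
  | nil => simp at hv
  | cons p ps ih =>
    by_cases hp : p.1 = v
    · simp [lookupV, hp]
    · simp only [List.map_cons, List.mem_cons] at hv
      rcases hv with hv | hv
      · exact absurd hv.symm hp
      · simp only [List.map_cons, lookupV, if_neg hp]
        exact ih hv

@[simp] theorem mkSub_keys {X : PreCtx A} {f : List (Expr A)} (hlen : f.length = X.length) :
    (mkSub X f).map Prod.fst = X.map Prod.fst := by
  unfold mkSub
  rw [List.map_fst_zip]
  simp [hlen]

theorem mkSub_take (X : PreCtx A) (f : List (Expr A)) (i : ℕ) :
    mkSub (X.take i) (f.take i) = (mkSub X f).take i := by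
  unfold mkSub
  show (List.zipWith Prod.mk _ _) = List.take i (List.zipWith Prod.mk _ _)
  rw [List.map_take, List.take_zipWith]

theorem mkSub_map (X : PreCtx A) (f : List (Expr A)) (h : Expr A → Expr A)
    (hlen : f.length = X.length) :
    mkSub X (f.map h) = (mkSub X f).map fun p => (p.1, h p.2) := by
  unfold mkSub
  rw [List.zip_map_right]
  rfl

theorem lookupV_mkSub_get {X : PreCtx A} {f : List (Expr A)} (hnd : (X.map Prod.fst).Nodup)
    (hlen : f.length = X.length) {i : ℕ} (hi : i < X.length) (hif : i < f.length) :
    lookupV (mkSub X f) (X[i]'hi).1 = f[i]'hif := by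
  induction X generalizing f i with
  | nil => simp at hi
  | cons p X ih =>
    cases f with
    | nil => simp at hif
    | cons e f =>
      cases i with
      | zero => simp [mkSub, lookupV]
      | succ i =>
        simp only [List.map_cons, List.nodup_cons] at hnd
        have hi' : i < X.length := by simpa using hi
        have hne : p.1 ≠ (X[i]'hi').1 := by
          intro hcon
          exact hnd.1 (hcon ▸ List.mem_map_of_mem (f := Prod.fst) (List.getElem_mem hi'))
        have : mkSub (p :: X) (e :: f) = (p.1, e) :: mkSub X f := rfl
        rw [List.getElem_cons_succ, List.getElem_cons_succ, this, lookupV, if_neg hne]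
        exact ih hnd.2 (by simpa using hlen) hi' (by simpa using hif)

@[simp] theorem Expr.substL_var (ps : List (A.Var × Expr A)) (x : A.Var) :
    (Expr.var x).substL ps = lookupV ps x := by
  simp [Expr.substL]

@[simp] theorem Expr.substL_app (ps : List (A.Var × Expr A)) (t : A.TermSym)
    (es : List (Expr A)) :
    (Expr.app t es).substL ps = .app t (es.map (·.substL ps)) := by
  simp [Expr.substL]

@[simp] theorem SortE.substL_def (U : SortE A) (ps : List (A.Var × Expr A)) :
    U.substL ps = ⟨U.head, U.args.map (·.substL ps)⟩ := rfl

/-- Composition of substitutions on an expression whose variables are scoped in `Z`. -/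
theorem Expr.substL_comp {Z : PreCtx A} {a : List (Expr A)} (hlen : a.length = Z.length)
    (ps : List (A.Var × Expr A)) (e : Expr A)
    (hFV : ∀ v, Occurs v e → v ∈ Z.map Prod.fst) :
    (e.substL (mkSub Z a)).substL ps = e.substL (mkSub Z (a.map (·.substL ps))) := by
  unfold Expr.substL
  rw [Expr.subst_subst]
  refine Expr.subst_congr e fun v hv => ?_
  rw [mkSub_map _ _ _ hlen]
  exact (lookupV_map (fun e => e.substL ps) (mkSub Z a) v
    (by rw [mkSub_keys hlen]; exact hFV v hv)).symm

theorem SortE.substL_comp {Z : PreCtx A} {a : List (Expr A)} (hlen : a.length = Z.length)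
    (ps : List (A.Var × Expr A)) (U : SortE A)
    (hFV : ∀ v, SOccurs v U → v ∈ Z.map Prod.fst) :
    (U.substL (mkSub Z a)).substL ps = U.substL (mkSub Z (a.map (·.substL ps))) := by
  unfold SortE.substL
  rw [SortE.subst_subst]
  refine SortE.subst_congr U fun v hv => ?_
  rw [mkSub_map _ _ _ hlen]
  exact (lookupV_map (fun e => e.substL ps) (mkSub Z a) v
    (by rw [mkSub_keys hlen]; exact hFV v hv)).symm

theorem subPre_comp {Z : PreCtx A} (hpre : IsPreCtx Z) {a : List (Expr A)}
    (hlen : a.length = Z.length) (Y : PreCtx A) (f : List (Expr A)) {i : ℕ}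
    (hi : i < Z.length) :
    (subPre Z a i hi).substL (mkSub Y f) = subPre Z (compMor Y f a) i hi := by
  unfold subPre compMor
  rw [SortE.substL_comp (by simp [hlen]) _ _ (fun v hv => hpre i hi v hv), List.map_take]

/-- A sort scoped in the first `i` entries is insensitive to the rest of the substitution. -/
theorem substL_eq_subPre {Z : PreCtx A} (hpre : IsPreCtx Z) {f : List (Expr A)}
    (hlen : f.length = Z.length) {i : ℕ} (hi : i < Z.length) :
    ((Z[i]'hi).2).substL (mkSub Z f) = subPre Z f i hi := by
  unfold subPre
  unfold SortE.substL
  refine SortE.subst_congr _ fun v hv => ?_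
  have hv' : v ∈ ((mkSub Z f).take i).map Prod.fst := by
    rw [← mkSub_take, mkSub_keys (by simp [hlen])]
    simpa using hpre i hi v hv
  rw [lookupV_take hv', mkSub_take]

theorem substL_ctxVars {Z : PreCtx A} (hnd : (Z.map Prod.fst).Nodup) {f : List (Expr A)}
    (hlen : f.length = Z.length) :
    (ctxVars Z).map (·.substL (mkSub Z f)) = f := by
  refine List.ext_getElem (by simp [ctxVars, hlen]) fun i hi hif => ?_
  simp only [ctxVars, List.getElem_map]
  rw [Expr.substL_var]
  exact lookupV_mkSub_get hnd hlen (by simpa [ctxVars] using hi) hif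

theorem sortE_ctxVars_substL {Z : PreCtx A} (hnd : (Z.map Prod.fst).Nodup)
    {f : List (Expr A)} (hlen : f.length = Z.length) (S : A.SortSym) :
    (SortE.mk S (ctxVars Z)).substL (mkSub Z f) = ⟨S, f⟩ := by
  simp only [SortE.substL_def]
  rw [substL_ctxVars hnd hlen]

section Der
variable {Ax : Set (Judg A)}

theorem derAt_mono {m n : ℕ} (h : m ≤ n) {J : Judg A} :
    DerAt Ax m J → DerAt Ax n J := by
  induction n with
  | zero => intro hd; interval_cases m; exact hd
  | succ n ih =>
    intro hd
    rcases Nat.lt_or_ge m (n + 1) with hm | hm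
    · exact Or.inl (ih (Nat.lt_succ_iff.mp hm) hd)
    · have : m = n + 1 := le_antisymm h hm
      exact this ▸ hd

theorem derivable_of_derAt {n : ℕ} {J : Judg A} (h : DerAt Ax n J) : Derivable Ax J :=
  ⟨n, h⟩

theorem fam_bound {k : ℕ} (F : ∀ i, i < k → Judg A)
    (h : ∀ i (hi : i < k), Derivable Ax (F i hi)) :
    ∃ N, ∀ i (hi : i < k), DerAt Ax N (F i hi) := by
  induction k with
  | zero => exact ⟨0, fun i hi => absurd hi (by omega)⟩
  | succ k ih =>
    obtain ⟨N, hN⟩ := ih (fun i hi => F i (hi.trans (Nat.lt_succ_self k)))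
      (fun i hi => h i _)
    obtain ⟨M, hM⟩ := h k (Nat.lt_succ_self k)
    refine ⟨max N M, fun i hi => ?_⟩
    rcases Nat.lt_or_ge i k with hik | hik
    · exact derAt_mono (le_max_left _ _) (hN i hik)
    · have : i = k := by omega
      subst this
      exact derAt_mono (le_max_right _ _) hM

theorem derivable_step {J : Judg A} (h : Step Ax (Derivable Ax) J) : Derivable Ax J := by
  cases h with
  | ctx_nil => exact ⟨1, Or.inr .ctx_nil⟩
  | ctx_cons hs hfresh hpre =>
    obtain ⟨n, hn⟩ := hs
    exact ⟨n + 1, Or.inr (.ctx_cons hn hfresh hpre)⟩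
  | s1 h => obtain ⟨n, hn⟩ := h; exact ⟨n + 1, Or.inr (.s1 hn)⟩
  | s2 h => obtain ⟨n, hn⟩ := h; exact ⟨n + 1, Or.inr (.s2 hn)⟩
  | s3 h1 h2 =>
    obtain ⟨n, hn⟩ := h1; obtain ⟨m, hm⟩ := h2
    exact ⟨max n m + 1, Or.inr (.s3 (derAt_mono (le_max_left _ _) hn)
      (derAt_mono (le_max_right _ _) hm))⟩
  | t1 h => obtain ⟨n, hn⟩ := h; exact ⟨n + 1, Or.inr (.t1 hn)⟩
  | t2 h => obtain ⟨n, hn⟩ := h; exact ⟨n + 1, Or.inr (.t2 hn)⟩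
  | t3 h1 h2 =>
    obtain ⟨n, hn⟩ := h1; obtain ⟨m, hm⟩ := h2
    exact ⟨max n m + 1, Or.inr (.t3 (derAt_mono (le_max_left _ _) hn)
      (derAt_mono (le_max_right _ _) hm))⟩
  | seqt h1 h2 =>
    obtain ⟨n, hn⟩ := h1; obtain ⟨m, hm⟩ := h2
    exact ⟨max n m + 1, Or.inr (.seqt (derAt_mono (le_max_left _ _) hn)
      (derAt_mono (le_max_right _ _) hm))⟩
  | seqteq h1 h2 h3 h4 =>
    obtain ⟨n1, h1⟩ := h1; obtain ⟨n2, h2⟩ := h2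
    obtain ⟨n3, h3⟩ := h3; obtain ⟨n4, h4⟩ := h4
    refine ⟨max (max n1 n2) (max n3 n4) + 1, Or.inr (.seqteq
      (derAt_mono ?_ h1) (derAt_mono ?_ h2) (derAt_mono ?_ h3) (derAt_mono ?_ h4))⟩ <;> omega
  | var hi h => obtain ⟨n, hn⟩ := h; exact ⟨n + 1, Or.inr (.var hi hn)⟩
  | sA hax h hv =>
    obtain ⟨n, hn⟩ := h
    obtain ⟨N, hN⟩ := fam_bound _ hv
    refine ⟨max n N + 1, Or.inr (.sA hax (derAt_mono (le_max_left _ _) hn)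
      (fun i hi => derAt_mono (le_max_right _ _) (hN i hi)))⟩
  | tA hax h hv =>
    obtain ⟨n, hn⟩ := h
    obtain ⟨N, hN⟩ := fam_bound _ hv
    refine ⟨max n N + 1, Or.inr (.tA hax (derAt_mono (le_max_left _ _) hn)
      (fun i hi => derAt_mono (le_max_right _ _) (hN i hi)))⟩
  | seqA hax h1 h2 =>
    obtain ⟨n, hn⟩ := h1; obtain ⟨m, hm⟩ := h2
    exact ⟨max n m + 1, Or.inr (.seqA hax (derAt_mono (le_max_left _ _) hn)
      (derAt_mono (le_max_right _ _) hm))⟩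
  | teqA hax h1 h2 =>
    obtain ⟨n, hn⟩ := h1; obtain ⟨m, hm⟩ := h2
    exact ⟨max n m + 1, Or.inr (.teqA hax (derAt_mono (le_max_left _ _) hn)
      (derAt_mono (le_max_right _ _) hm))⟩
  | @sSub Xa S hax Y hY f hlen hJ hYc hargs =>
    obtain ⟨n, hn⟩ := hJ; obtain ⟨m, hm⟩ := hYc
    obtain ⟨N, hN⟩ := fam_bound
      (fun i hi => Judg.term Y (f[i]'(hlen ▸ hi)) (subPre Xa f i hi))
      (fun i hi => hargs i hi (hlen ▸ hi))
    refine ⟨max (max n m) N + 1, Or.inr (.sSub hax hY hlen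
      (derAt_mono (by omega) hn) (derAt_mono (by omega) hm)
      (fun i hi hif => derAt_mono (by omega) (hN i hi)))⟩
  | @tSub Xa t U hax Y hY f hlen hJ hU hargs =>
    obtain ⟨n, hn⟩ := hJ; obtain ⟨m, hm⟩ := hU
    obtain ⟨N, hN⟩ := fam_bound
      (fun i hi => Judg.term Y (f[i]'(hlen ▸ hi)) (subPre Xa f i hi))
      (fun i hi => hargs i hi (hlen ▸ hi))
    refine ⟨max (max n m) N + 1, Or.inr (.tSub hax hY hlen
      (derAt_mono (by omega) hn) (derAt_mono (by omega) hm)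
      (fun i hi hif => derAt_mono (by omega) (hN i hi)))⟩
  | @seqSub1 Xa U U' hax Y hY f hlen hJ h1 h2 hargs =>
    obtain ⟨n, hn⟩ := hJ; obtain ⟨m1, hm1⟩ := h1; obtain ⟨m2, hm2⟩ := h2
    obtain ⟨N, hN⟩ := fam_bound
      (fun i hi => Judg.term Y (f[i]'(hlen ▸ hi)) (subPre Xa f i hi))
      (fun i hi => hargs i hi (hlen ▸ hi))
    refine ⟨max (max n N) (max m1 m2) + 1, Or.inr (.seqSub1 hax hY hlen
      (derAt_mono (by omega) hn) (derAt_mono (by omega) hm1) (derAt_mono (by omega) hm2)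
      (fun i hi hif => derAt_mono (by omega) (hN i hi)))⟩
  | @seqSub2 Xa S hax Y hY f g hlf hlg hJ h1 h2 hargs =>
    obtain ⟨n, hn⟩ := hJ; obtain ⟨m1, hm1⟩ := h1; obtain ⟨m2, hm2⟩ := h2
    obtain ⟨N, hN⟩ := fam_bound
      (fun i hi => Judg.termEq Y (f[i]'(hlf ▸ hi)) (g[i]'(hlg ▸ hi)) (subPre Xa f i hi))
      (fun i hi => hargs i hi (hlf ▸ hi) (hlg ▸ hi))
    refine ⟨max (max n N) (max m1 m2) + 1, Or.inr (.seqSub2 hax hY hlf hlg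
      (derAt_mono (by omega) hn) (derAt_mono (by omega) hm1) (derAt_mono (by omega) hm2)
      (fun i hi hif hig => derAt_mono (by omega) (hN i hi)))⟩
  | @teqSub1 Xa u u' U hax Y hY f hlen hJ h1 h2 hargs =>
    obtain ⟨n, hn⟩ := hJ; obtain ⟨m1, hm1⟩ := h1; obtain ⟨m2, hm2⟩ := h2
    obtain ⟨N, hN⟩ := fam_bound
      (fun i hi => Judg.term Y (f[i]'(hlen ▸ hi)) (subPre Xa f i hi))
      (fun i hi => hargs i hi (hlen ▸ hi))
    refine ⟨max (max n N) (max m1 m2) + 1, Or.inr (.teqSub1 hax hY hlen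
      (derAt_mono (by omega) hn) (derAt_mono (by omega) hm1) (derAt_mono (by omega) hm2)
      (fun i hi hif => derAt_mono (by omega) (hN i hi)))⟩
  | @teqSub2 Xa t U hax Y hY f g hlf hlg hJ h1 h2 hargs =>
    obtain ⟨n, hn⟩ := hJ; obtain ⟨m1, hm1⟩ := h1; obtain ⟨m2, hm2⟩ := h2
    obtain ⟨N, hN⟩ := fam_bound
      (fun i hi => Judg.termEq Y (f[i]'(hlf ▸ hi)) (g[i]'(hlg ▸ hi)) (subPre Xa f i hi))
      (fun i hi => hargs i hi (hlf ▸ hi) (hlg ▸ hi))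
    refine ⟨max (max n N) (max m1 m2) + 1, Or.inr (.teqSub2 hax hY hlf hlg
      (derAt_mono (by omega) hn) (derAt_mono (by omega) hm1) (derAt_mono (by omega) hm2)
      (fun i hi hif hig => derAt_mono (by omega) (hN i hi)))⟩

end Der

section Struct
variable {Ax : Set (Judg A)}

theorem occurs_var_iff {v w : A.Var} : Occurs v (Expr.var w : Expr A) ↔ v = w := by
  constructor
  · intro h; cases h; rfl
  · rintro rfl; exact .var

theorem occurs_app_iff {v : A.Var} {t : A.TermSym} {es : List (Expr A)} :
    Occurs v (Expr.app t es) ↔ ∃ e ∈ es, Occurs v e := by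
  constructor
  · intro h; cases h with | app he hv => exact ⟨_, he, hv⟩
  · rintro ⟨e, he, hv⟩; exact .app he hv

/-- Key structural facts about derivable contexts. -/
def CtxGood (X : PreCtx A) : Prop := (X.map Prod.fst).Nodup ∧ IsPreCtx X

def StructOK (Ax : Set (Judg A)) (n : ℕ) : Judg A → Prop
  | .ctx X => CtxGood X ∧ ∀ i (hi : i < X.length),
      Derivable Ax (.ctx (X.take i)) ∧ Derivable Ax (.sort (X.take i) (X[i]'hi).2)
  | .sort X _ => ∃ m < n, DerAt Ax m (.ctx X)
  | _ => True

theorem structOK : ∀ n (J : Judg A), DerAt Ax n J → StructOK Ax n J := by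
  intro n
  induction n with
  | zero => intro J h; exact h.elim
  | succ n ih =>
    intro J h
    rcases h with h | h
    · have := ih J h
      cases J with
      | ctx X => exact this
      | sort X U => obtain ⟨m, hm, hd⟩ := this; exact ⟨m, by omega, hd⟩
      | term X u U => trivial
      | sortEq X U V => trivial
      | termEq X u v U => trivial
    cases h with
    | ctx_nil =>
      refine ⟨⟨by simp, fun i hi => by simp at hi⟩, fun i hi => by simp at hi⟩
    | @ctx_cons X U x hs hfresh hpre =>
      have hsort := ih _ hs
      obtain ⟨m, hm, hctxX⟩ := hsort
      have hX := ih _ (derAt_mono (by omega : m ≤ n) hctxX)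
      obtain ⟨⟨hnd, hpc⟩, hpref⟩ := hX
      have hkeys : (X ++ [(x, U)]).map Prod.fst = X.map Prod.fst ++ [x] := by simp
      refine ⟨⟨?_, hpre⟩, ?_⟩
      · rw [hkeys, List.nodup_append]
        refine ⟨hnd, List.nodup_singleton x, fun a ha b hb => ?_⟩
        simp only [List.mem_singleton] at hb
        subst hb; intro hab; subst hab
        obtain ⟨p, hp, hpx⟩ := List.mem_map.mp ha
        exact hfresh p hp hpx
      · intro i hi
        simp only [List.length_append, List.length_singleton] at hi
        rcases Nat.lt_or_ge i X.length with hil | hil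
        · rw [List.take_append_of_le_length (le_of_lt hil),
            List.getElem_append_left hil]
          exact hpref i hil
        · have : i = X.length := by omega
          subst this
          rw [List.take_append_of_le_length le_rfl, List.take_length]
          constructor
          · exact ⟨m, hctxX⟩
          · rw [List.getElem_append_right (le_refl X.length)]
            simpa using ⟨n, hs⟩
    | sA hax hctx hv => exact ⟨n, Nat.lt_succ_self n, hctx⟩
    | @sSub Xa S hax Y hY f hlen hJ hYc hargs => exact ⟨n, Nat.lt_succ_self n, hYc⟩
    | _ => trivial

theorem ctxGood_of_derivable {X : PreCtx A} (h : Derivable Ax (.ctx X)) : CtxGood X := by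
  obtain ⟨n, hn⟩ := h
  exact (structOK n _ hn).1

theorem ctx_prefix {X : PreCtx A} (h : Derivable Ax (.ctx X)) :
    ∀ i (hi : i < X.length),
      Derivable Ax (.ctx (X.take i)) ∧ Derivable Ax (.sort (X.take i) (X[i]'hi).2) := by
  obtain ⟨n, hn⟩ := h
  exact (structOK n _ hn).2

theorem ctx_of_sort {X : PreCtx A} {U : SortE A} (h : Derivable Ax (.sort X U)) :
    Derivable Ax (.ctx X) := by
  obtain ⟨n, hn⟩ := h
  cases n with
  | zero => exact hn.elim
  | succ n =>
    obtain ⟨m, _, hd⟩ := structOK (Ax := Ax) (n+1) _ hn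
    exact ⟨m, hd⟩

/-- Free variables of derivable judgments are scoped in the context. -/
def ESub (u : Expr A) (X : PreCtx A) : Prop := ∀ v, Occurs v u → v ∈ X.map Prod.fst
def SSub (U : SortE A) (X : PreCtx A) : Prop := ∀ v, SOccurs v U → v ∈ X.map Prod.fst

def FVOK : Judg A → Prop
  | .ctx _ => True
  | .sort X U => SSub U X
  | .term X u U => ESub u X ∧ SSub U X
  | .sortEq X U V => SSub U X ∧ SSub V X
  | .termEq X u v U => ESub u X ∧ ESub v X ∧ SSub U X

theorem ssub_of_list {Y : PreCtx A} {S : A.SortSym} {f : List (Expr A)}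
    (h : ∀ i (hi : i < f.length), ESub (f[i]'hi) Y) : SSub ⟨S, f⟩ Y := by
  rintro v ⟨e, he, hv⟩
  obtain ⟨i, hi, rfl⟩ := List.mem_iff_getElem.mp he
  exact h i hi v hv

theorem esub_app_of_list {Y : PreCtx A} {t : A.TermSym} {f : List (Expr A)}
    (h : ∀ i (hi : i < f.length), ESub (f[i]'hi) Y) : ESub (.app t f) Y := by
  intro v hv
  rw [occurs_app_iff] at hv
  obtain ⟨e, he, hv⟩ := hv
  obtain ⟨i, hi, rfl⟩ := List.mem_iff_getElem.mp he
  exact h i hi v hv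

theorem ssub_ctxVars {Y : PreCtx A} (S : A.SortSym) : SSub ⟨S, ctxVars Y⟩ Y := by
  rintro v ⟨e, he, hv⟩
  obtain ⟨p, hp, rfl⟩ := List.mem_map.mp he
  rw [occurs_var_iff] at hv
  subst hv
  exact List.mem_map_of_mem (f := Prod.fst) hp

theorem esub_ctxVars {Y : PreCtx A} (t : A.TermSym) : ESub (.app t (ctxVars Y)) Y := by
  intro v hv
  rw [occurs_app_iff] at hv
  obtain ⟨e, he, hv⟩ := hv
  obtain ⟨p, hp, rfl⟩ := List.mem_map.mp he
  rw [occurs_var_iff] at hv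
  subst hv
  exact List.mem_map_of_mem (f := Prod.fst) hp

theorem fvOK (hAx : IsPretheory Ax) : ∀ n (J : Judg A), DerAt Ax n J → FVOK J := by
  intro n
  induction n with
  | zero => intro J h; exact h.elim
  | succ n ih =>
    intro J h
    rcases h with h | h
    · exact ih J h
    cases h with
    | ctx_nil => trivial
    | ctx_cons hs hfresh hpre => trivial
    | s1 h => have := ih _ h; exact ⟨this, this⟩
    | s2 h => have := ih _ h; exact ⟨this.2, this.1⟩
    | s3 h1 h2 => exact ⟨(ih _ h1).1, (ih _ h2).2⟩
    | t1 h => have := ih _ h; exact ⟨this.1, this.1, this.2⟩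
    | t2 h => have := ih _ h; exact ⟨this.2.1, this.1, this.2.2⟩
    | t3 h1 h2 => exact ⟨(ih _ h1).1, (ih _ h2).2.1, (ih _ h1).2.2⟩
    | seqt h1 h2 => exact ⟨(ih _ h2).1, (ih _ h1).2⟩
    | seqteq h1 h2 h3 h4 => exact ⟨(ih _ h3).1, (ih _ h4).1, (ih _ h3).2⟩
    | @var X i hi h =>
      refine ⟨fun v hv => ?_, ih _ h⟩
      rw [occurs_var_iff] at hv
      subst hv
      exact List.mem_map_of_mem (f := Prod.fst) (List.getElem_mem hi)
    | @sA X U hax hctx hv =>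
      have hshape := hAx.sort_shape X U hax
      intro v hoc
      exact ssub_ctxVars (Y := X) U.head v (by
        rcases hoc with ⟨e, he, hocc⟩
        exact ⟨e, by rw [← hshape]; exact he, hocc⟩)
    | @tA X u U hax hsort hv =>
      obtain ⟨t, rfl⟩ := hAx.term_shape X u U hax
      exact ⟨esub_ctxVars t, ih _ hsort⟩
    | seqA hax h1 h2 => exact ⟨ih _ h1, ih _ h2⟩
    | teqA hax h1 h2 => exact ⟨(ih _ h1).1, (ih _ h2).1, (ih _ h1).2⟩
    | @sSub Xa S hax Y hY f hlen hJ hYc hargs =>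
      exact ssub_of_list fun i hif v hv => (ih _ (hargs i (hlen ▸ hif) hif)).1 v hv
    | @tSub Xa t U hax Y hY f hlen hJ hU hargs =>
      exact ⟨esub_app_of_list fun i hif v hv => (ih _ (hargs i (hlen ▸ hif) hif)).1 v hv,
        ih _ hU⟩
    | seqSub1 hax hY hlen hJ h1 h2 hargs => exact ⟨ih _ h1, ih _ h2⟩
    | seqSub2 hax hY hlf hlg hJ h1 h2 hargs => exact ⟨ih _ h1, ih _ h2⟩
    | teqSub1 hax hY hlen hJ h1 h2 hargs =>
      exact ⟨(ih _ h1).1, (ih _ h2).1, (ih _ h1).2⟩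
    | teqSub2 hax hY hlf hlg hJ h1 h2 hargs =>
      exact ⟨(ih _ h1).1, (ih _ h2).1, (ih _ h1).2⟩

theorem fv_sort (hAx : IsPretheory Ax) {X : PreCtx A} {U : SortE A}
    (h : Derivable Ax (.sort X U)) : SSub U X := by
  obtain ⟨n, hn⟩ := h; exact fvOK hAx n _ hn

theorem fv_term_sort (hAx : IsPretheory Ax) {X : PreCtx A} {u : Expr A} {U : SortE A}
    (h : Derivable Ax (.term X u U)) : SSub U X := by
  obtain ⟨n, hn⟩ := h; exact (fvOK hAx n _ hn).2

theorem fv_sortEq (hAx : IsPretheory Ax) {X : PreCtx A} {U V : SortE A}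
    (h : Derivable Ax (.sortEq X U V)) : SSub U X ∧ SSub V X := by
  obtain ⟨n, hn⟩ := h; exact fvOK hAx n _ hn

end Struct

section Main
variable {Ax : Set (Judg A)}

theorem compMor_length (Y : PreCtx A) (f k : List (Expr A)) :
    (compMor Y f k).length = k.length := by simp [compMor]

theorem compMor_getElem (Y : PreCtx A) (f k : List (Expr A)) {i : ℕ} (hi : i < k.length) :
    (compMor Y f k)[i]'(by simpa [compMor] using hi) = (k[i]'hi).substL (mkSub Y f) := by
  simp [compMor]

theorem sortE_substL_compMor (S : A.SortSym) (a : List (Expr A)) (Y : PreCtx A)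
    (f : List (Expr A)) :
    (SortE.mk S a).substL (mkSub Y f) = ⟨S, compMor Y f a⟩ := rfl

theorem expr_app_substL_compMor (t : A.TermSym) (a : List (Expr A)) (Y : PreCtx A)
    (f : List (Expr A)) :
    (Expr.app t a).substL (mkSub Y f) = .app t (compMor Y f a) := by
  simp [compMor]

theorem sortE_comp {Xa : PreCtx A} {V : SortE A} (hFV : SSub V Xa) {a : List (Expr A)}
    (hlen : a.length = Xa.length) (Y : PreCtx A) (f : List (Expr A)) :
    (V.substL (mkSub Xa a)).substL (mkSub Y f) = V.substL (mkSub Xa (compMor Y f a)) :=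
  SortE.substL_comp hlen _ V hFV

theorem expr_comp {Xa : PreCtx A} {u : Expr A} (hFV : ESub u Xa) {a : List (Expr A)}
    (hlen : a.length = Xa.length) (Y : PreCtx A) (f : List (Expr A)) :
    (u.substL (mkSub Xa a)).substL (mkSub Y f) = u.substL (mkSub Xa (compMor Y f a)) :=
  Expr.substL_comp hlen _ u hFV

/-- The main induction predicate: stability of judgments under substitution along
context morphisms and morphism equalities. -/
def Good (Ax : Set (Judg A)) : Judg A → Prop
  | .ctx _ => True
  | .sort Y U =>
      (∀ X f, IsMor Ax X Y f → Derivable Ax (.sort X (U.substL (mkSub Y f)))) ∧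
      (∀ X f g, MorEq Ax X Y f g →
        Derivable Ax (.sortEq X (U.substL (mkSub Y f)) (U.substL (mkSub Y g))))
  | .term Y u U =>
      (∀ X f, IsMor Ax X Y f →
        Derivable Ax (.term X (u.substL (mkSub Y f)) (U.substL (mkSub Y f)))) ∧
      (∀ X f g, MorEq Ax X Y f g →
        Derivable Ax (.termEq X (u.substL (mkSub Y f)) (u.substL (mkSub Y g))
          (U.substL (mkSub Y f))))
  | .sortEq Y U V =>
      (∀ X f, IsMor Ax X Y f →
        Derivable Ax (.sortEq X (U.substL (mkSub Y f)) (V.substL (mkSub Y f)))) ∧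
      (∀ X f g, MorEq Ax X Y f g →
        Derivable Ax (.sortEq X (U.substL (mkSub Y f)) (V.substL (mkSub Y g))))
  | .termEq Y u v U =>
      ∀ X f, IsMor Ax X Y f →
        Derivable Ax (.termEq X (u.substL (mkSub Y f)) (v.substL (mkSub Y f))
          (U.substL (mkSub Y f)))

end Main

section MainThm
variable {Ax : Set (Judg A)}

theorem goodAt (hAx : IsPretheory Ax) : ∀ n (J : Judg A), DerAt Ax n J → Good Ax J := by
  intro n
  induction n with
  | zero => intro J h; exact h.elim
  | succ n ih =>
    intro J h
    rcases h with h | h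
    · exact ih J h
    have hself : Derivable Ax J := ⟨n + 1, Or.inr h⟩
    cases h with
    | ctx_nil => trivial
    | ctx_cons _ _ _ => trivial
    | @s1 Y U h1 =>
      have G := ih _ h1
      exact ⟨fun X f hf => derivable_step (.s1 (G.1 X f hf)), fun X f g hfg => G.2 X f g hfg⟩
    | @s2 Y U V h1 =>
      have G := ih _ h1
      refine ⟨fun X f hf => derivable_step (.s2 (G.1 X f hf)), ?_⟩
      intro X f g hfg
      have q := G.2 X f g hfg
      have pf := G.1 X f hfg.1
      have pg := G.1 X g hfg.2.1
      exact derivable_step (.s3 (derivable_step (.s3 (derivable_step (.s2 pf)) q))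
        (derivable_step (.s2 pg)))
    | @s3 Y U V W h1 h2 =>
      have G1 := ih _ h1
      have G2 := ih _ h2
      exact ⟨fun X f hf => derivable_step (.s3 (G1.1 X f hf) (G2.1 X f hf)),
        fun X f g hfg => derivable_step (.s3 (G1.1 X f hfg.1) (G2.2 X f g hfg))⟩
    | @t1 Y u U h1 =>
      have G := ih _ h1
      exact fun X f hf => derivable_step (.t1 (G.1 X f hf))
    | @t2 Y u v U h1 =>
      have G := ih _ h1
      exact fun X f hf => derivable_step (.t2 (G X f hf))
    | @t3 Y u v w U h1 h2 =>
      have G1 := ih _ h1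
      have G2 := ih _ h2
      exact fun X f hf => derivable_step (.t3 (G1 X f hf) (G2 X f hf))
    | @seqt Y U U' u h1 h2 =>
      have G1 := ih _ h1
      have G2 := ih _ h2
      refine ⟨fun X f hf => derivable_step (.seqt (G1.1 X f hf) (G2.1 X f hf)), ?_⟩
      intro X f g hfg
      have a := G2.2 X f g hfg
      have b := G1.1 X f hfg.1
      have c := G1.1 X g hfg.2.1
      have e := G1.2 X f g hfg
      have h3 := derivable_step (.seqt b (G2.1 X f hfg.1))
      have d := derivable_step (.s3 c (derivable_step (.s3 (derivable_step (.s2 e)) b)))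
      have h4 := derivable_step (.seqt d (G2.1 X g hfg.2.1))
      exact derivable_step (.seqteq b a h3 h4)
    | @seqteq Y U U' u u' h1 h2 h3 h4 =>
      have G1 := ih _ h1
      have G2 := ih _ h2
      have G3 := ih _ h3
      have G4 := ih _ h4
      exact fun X f hf =>
        derivable_step (.seqteq (G1.1 X f hf) (G2 X f hf) (G3.1 X f hf) (G4.1 X f hf))
    | @var Y i hi hsort =>
      refine ⟨?_, ?_⟩
      · intro X f hf
        obtain ⟨hcX, hcY, hlen, hterms⟩ := hf
        obtain ⟨hndY, hpreY⟩ := ctxGood_of_derivable hcY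
        have hif : i < f.length := by omega
        rw [Expr.substL_var, lookupV_mkSub_get hndY hlen hi hif,
          substL_eq_subPre hpreY hlen hi]
        exact hterms i hi hif
      · intro X f g hfg
        obtain ⟨⟨hcX, hcY, hlenf, -⟩, ⟨-, -, hleng, -⟩, heq⟩ := hfg
        obtain ⟨hndY, hpreY⟩ := ctxGood_of_derivable hcY
        have hif : i < f.length := by omega
        have hig : i < g.length := by omega
        rw [Expr.substL_var, Expr.substL_var, lookupV_mkSub_get hndY hlenf hi hif,
          lookupV_mkSub_get hndY hleng hi hig, substL_eq_subPre hpreY hlenf hi]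
        exact heq i hi hif hig
    | @sA Y U hax hctx hv =>
      have hshape := hAx.sort_shape Y U hax
      obtain ⟨S, args⟩ := U
      replace hshape : args = ctxVars Y := hshape
      subst hshape
      have hP : ∀ X f, IsMor Ax X Y f →
          Derivable Ax (.sort X ((SortE.mk S (ctxVars Y)).substL (mkSub Y f))) := by
        intro X f hf
        obtain ⟨hcX, hcY, hlen, hterms⟩ := hf
        obtain ⟨hndX, hpreX⟩ := ctxGood_of_derivable hcX
        obtain ⟨hndY, hpreY⟩ := ctxGood_of_derivable hcY
        rw [sortE_ctxVars_substL hndY hlen]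
        exact derivable_step (.sSub hax hpreX hlen hself hcX (fun i hi hif => hterms i hi hif))
      refine ⟨hP, ?_⟩
      intro X f g hfg
      obtain ⟨hcX, hcY, hlenf, htf⟩ := hfg.1
      have hleng := hfg.2.1.2.2.1
      obtain ⟨hndX, hpreX⟩ := ctxGood_of_derivable hcX
      obtain ⟨hndY, hpreY⟩ := ctxGood_of_derivable hcY
      rw [sortE_ctxVars_substL hndY hlenf, sortE_ctxVars_substL hndY hleng]
      have h1 := hP X f hfg.1
      have h2 := hP X g hfg.2.1
      rw [sortE_ctxVars_substL hndY hlenf] at h1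
      rw [sortE_ctxVars_substL hndY hleng] at h2
      exact derivable_step (.seqSub2 hax hpreX hlenf hleng hself h1 h2
        (fun i hi hif hig => hfg.2.2 i hi hif hig))
    | @tA Y u U hax hsort hv =>
      obtain ⟨t, rfl⟩ := hAx.term_shape Y u U hax
      have GU := ih _ hsort
      have hP : ∀ X f, IsMor Ax X Y f →
          Derivable Ax (.term X ((Expr.app t (ctxVars Y)).substL (mkSub Y f))
            (U.substL (mkSub Y f))) := by
        intro X f hf
        obtain ⟨hcX, hcY, hlen, hterms⟩ := hf
        obtain ⟨hndX, hpreX⟩ := ctxGood_of_derivable hcX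
        obtain ⟨hndY, hpreY⟩ := ctxGood_of_derivable hcY
        rw [Expr.substL_app, substL_ctxVars hndY hlen]
        exact derivable_step (.tSub hax hpreX hlen hself
          (GU.1 X f ⟨hcX, hcY, hlen, hterms⟩) hterms)
      refine ⟨hP, ?_⟩
      intro X f g hfg
      obtain ⟨hcX, hcY, hlenf, htf⟩ := hfg.1
      have hleng := hfg.2.1.2.2.1
      obtain ⟨hndX, hpreX⟩ := ctxGood_of_derivable hcX
      obtain ⟨hndY, hpreY⟩ := ctxGood_of_derivable hcY
      have h1 := hP X f hfg.1
      have h2 := hP X g hfg.2.1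
      rw [Expr.substL_app, substL_ctxVars hndY hlenf] at h1
      rw [Expr.substL_app, substL_ctxVars hndY hleng] at h2
      have hconv := derivable_step (.s2 (GU.2 X f g hfg))
      have h2' := derivable_step (.seqt hconv h2)
      rw [Expr.substL_app, Expr.substL_app, substL_ctxVars hndY hlenf,
        substL_ctxVars hndY hleng]
      exact derivable_step (.teqSub2 hax hpreX hlenf hleng hself h1 h2'
        (fun i hi hif hig => hfg.2.2 i hi hif hig))
    | @seqA Y U U' hax h1 h2 =>
      have G1 := ih _ h1
      have G2 := ih _ h2
      have hP : ∀ X f, IsMor Ax X Y f →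
          Derivable Ax (.sortEq X (U.substL (mkSub Y f)) (U'.substL (mkSub Y f))) := by
        intro X f hf
        obtain ⟨hcX, hcY, hlen, hterms⟩ := hf
        obtain ⟨hndX, hpreX⟩ := ctxGood_of_derivable hcX
        exact derivable_step (.seqSub1 hax hpreX hlen hself
          (G1.1 X f ⟨hcX, hcY, hlen, hterms⟩) (G2.1 X f ⟨hcX, hcY, hlen, hterms⟩) hterms)
      exact ⟨hP, fun X f g hfg =>
        derivable_step (.s3 (hP X f hfg.1) (G2.2 X f g hfg))⟩
    | @teqA Y u u' U hax h1 h2 =>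
      have G1 := ih _ h1
      have G2 := ih _ h2
      intro X f hf
      obtain ⟨hcX, hcY, hlen, hterms⟩ := hf
      obtain ⟨hndX, hpreX⟩ := ctxGood_of_derivable hcX
      exact derivable_step (.teqSub1 hax hpreX hlen hself
        (G1.1 X f ⟨hcX, hcY, hlen, hterms⟩) (G2.1 X f ⟨hcX, hcY, hlen, hterms⟩) hterms)
    | @sSub Xa S hax Y hY a hlen hJ hYc hargs =>
      have hpreXa : IsPreCtx Xa := hAx.wf_ctx _ hax
      have hJd : Derivable Ax (introSort Xa S) := ⟨n, hJ⟩
      have hP : ∀ X f, IsMor Ax X Y f →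
          Derivable Ax (.sort X ((SortE.mk S a).substL (mkSub Y f))) := by
        intro X f hf
        obtain ⟨hcX, hcY, hlenf, hterms⟩ := hf
        obtain ⟨hndX, hpreX⟩ := ctxGood_of_derivable hcX
        rw [sortE_substL_compMor]
        refine derivable_step (.sSub hax hpreX (by rw [compMor_length, hlen]) hJd hcX ?_)
        intro i hi hif
        have hia : i < a.length := hlen ▸ hi
        have hGt := (ih _ (hargs i hi hia)).1 X f ⟨hcX, hcY, hlenf, hterms⟩
        rw [subPre_comp hpreXa hlen Y f hi] at hGt
        simpa [compMor] using hGt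
      refine ⟨hP, ?_⟩
      intro X f g hfg
      obtain ⟨hcX, hcY, hlenf, htf⟩ := hfg.1
      have hleng := hfg.2.1.2.2.1
      obtain ⟨hndX, hpreX⟩ := ctxGood_of_derivable hcX
      have h1 := hP X f hfg.1
      have h2 := hP X g hfg.2.1
      rw [sortE_substL_compMor] at h1 h2
      rw [sortE_substL_compMor, sortE_substL_compMor]
      refine derivable_step (.seqSub2 hax hpreX (by rw [compMor_length, hlen])
        (by rw [compMor_length, hlen]) hJd h1 h2 ?_)
      intro i hi hif hig
      have hia : i < a.length := hlen ▸ hi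
      have hGt := (ih _ (hargs i hi hia)).2 X f g hfg
      rw [subPre_comp hpreXa hlen Y f hi] at hGt
      simpa [compMor] using hGt
    | @tSub Xa t V hax Y hY a hlen hJ hU hargs =>
      have hpreXa : IsPreCtx Xa := hAx.wf_ctx _ hax
      have hJd : Derivable Ax (introTerm Xa t V) := ⟨n, hJ⟩
      have hFV : SSub V Xa := fv_term_sort hAx hJd
      have GU := ih _ hU
      have hP : ∀ X f, IsMor Ax X Y f →
          Derivable Ax (.term X ((Expr.app t a).substL (mkSub Y f))
            ((V.substL (mkSub Xa a)).substL (mkSub Y f))) := by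
        intro X f hf
        obtain ⟨hcX, hcY, hlenf, hterms⟩ := hf
        obtain ⟨hndX, hpreX⟩ := ctxGood_of_derivable hcX
        rw [expr_app_substL_compMor, sortE_comp hFV hlen]
        have hsort' := GU.1 X f ⟨hcX, hcY, hlenf, hterms⟩
        rw [sortE_comp hFV hlen] at hsort'
        refine derivable_step (.tSub hax hpreX (by rw [compMor_length, hlen]) hJd hsort' ?_)
        intro i hi hif
        have hia : i < a.length := hlen ▸ hi
        have hGt := (ih _ (hargs i hi hia)).1 X f ⟨hcX, hcY, hlenf, hterms⟩
        rw [subPre_comp hpreXa hlen Y f hi] at hGt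
        simpa [compMor] using hGt
      refine ⟨hP, ?_⟩
      intro X f g hfg
      obtain ⟨hcX, hcY, hlenf, htf⟩ := hfg.1
      have hleng := hfg.2.1.2.2.1
      obtain ⟨hndX, hpreX⟩ := ctxGood_of_derivable hcX
      have h1 := hP X f hfg.1
      have h2 := hP X g hfg.2.1
      rw [expr_app_substL_compMor, sortE_comp hFV hlen] at h1
      rw [expr_app_substL_compMor, sortE_comp hFV hlen] at h2
      have hconv := derivable_step (.s2 (GU.2 X f g hfg))
      rw [sortE_comp hFV hlen, sortE_comp hFV hlen] at hconv
      have h2' := derivable_step (.seqt hconv h2)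
      rw [expr_app_substL_compMor, expr_app_substL_compMor, sortE_comp hFV hlen]
      refine derivable_step (.teqSub2 hax hpreX (by rw [compMor_length, hlen])
        (by rw [compMor_length, hlen]) hJd h1 h2' ?_)
      intro i hi hif hig
      have hia : i < a.length := hlen ▸ hi
      have hGt := (ih _ (hargs i hi hia)).2 X f g hfg
      rw [subPre_comp hpreXa hlen Y f hi] at hGt
      simpa [compMor] using hGt
    | @seqSub1 Xa U U' hax Y hY a hlen hJ h1 h2 hargs =>
      have hpreXa : IsPreCtx Xa := hAx.wf_ctx _ hax
      have hJd : Derivable Ax (.sortEq Xa U U') := ⟨n, hJ⟩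
      have hFV := fv_sortEq hAx hJd
      have G1 := ih _ h1
      have G2 := ih _ h2
      have hP : ∀ X f, IsMor Ax X Y f →
          Derivable Ax (.sortEq X ((U.substL (mkSub Xa a)).substL (mkSub Y f))
            ((U'.substL (mkSub Xa a)).substL (mkSub Y f))) := by
        intro X f hf
        obtain ⟨hcX, hcY, hlenf, hterms⟩ := hf
        obtain ⟨hndX, hpreX⟩ := ctxGood_of_derivable hcX
        rw [sortE_comp hFV.1 hlen, sortE_comp hFV.2 hlen]
        have hs1 := G1.1 X f ⟨hcX, hcY, hlenf, hterms⟩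
        have hs2 := G2.1 X f ⟨hcX, hcY, hlenf, hterms⟩
        rw [sortE_comp hFV.1 hlen] at hs1
        rw [sortE_comp hFV.2 hlen] at hs2
        refine derivable_step (.seqSub1 hax hpreX (by rw [compMor_length, hlen]) hJd hs1 hs2 ?_)
        intro i hi hif
        have hia : i < a.length := hlen ▸ hi
        have hGt := (ih _ (hargs i hi hia)).1 X f ⟨hcX, hcY, hlenf, hterms⟩
        rw [subPre_comp hpreXa hlen Y f hi] at hGt
        simpa [compMor] using hGt
      exact ⟨hP, fun X f g hfg =>
        derivable_step (.s3 (hP X f hfg.1) (G2.2 X f g hfg))⟩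
    | @seqSub2 Xa S hax Y hY a b hlf hlg hJ h1 h2 hargs =>
      have hpreXa : IsPreCtx Xa := hAx.wf_ctx _ hax
      have hJd : Derivable Ax (introSort Xa S) := ⟨n, hJ⟩
      have G1 := ih _ h1
      have G2 := ih _ h2
      have hP : ∀ X f, IsMor Ax X Y f →
          Derivable Ax (.sortEq X ((SortE.mk S a).substL (mkSub Y f))
            ((SortE.mk S b).substL (mkSub Y f))) := by
        intro X f hf
        obtain ⟨hcX, hcY, hlenf, hterms⟩ := hf
        obtain ⟨hndX, hpreX⟩ := ctxGood_of_derivable hcX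
        rw [sortE_substL_compMor, sortE_substL_compMor]
        have hs1 := G1.1 X f ⟨hcX, hcY, hlenf, hterms⟩
        have hs2 := G2.1 X f ⟨hcX, hcY, hlenf, hterms⟩
        rw [sortE_substL_compMor] at hs1 hs2
        refine derivable_step (.seqSub2 hax hpreX (by rw [compMor_length, hlf])
          (by rw [compMor_length, hlg]) hJd hs1 hs2 ?_)
        intro i hi hif hig
        have hia : i < a.length := hlf ▸ hi
        have hib : i < b.length := hlg ▸ hi
        have hGt := (ih _ (hargs i hi hia hib)) X f ⟨hcX, hcY, hlenf, hterms⟩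
        rw [subPre_comp hpreXa hlf Y f hi] at hGt
        simpa [compMor] using hGt
      exact ⟨hP, fun X f g hfg =>
        derivable_step (.s3 (hP X f hfg.1) (G2.2 X f g hfg))⟩
    | @teqSub1 Xa u u' U hax Y hY a hlen hJ h1 h2 hargs =>
      have hpreXa : IsPreCtx Xa := hAx.wf_ctx _ hax
      have hJd : Derivable Ax (.termEq Xa u u' U) := ⟨n, hJ⟩
      obtain ⟨hEu, hEu', hSU⟩ : ESub u Xa ∧ ESub u' Xa ∧ SSub U Xa := fvOK hAx n _ hJ
      have G1 := ih _ h1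
      have G2 := ih _ h2
      intro X f hf
      obtain ⟨hcX, hcY, hlenf, hterms⟩ := hf
      obtain ⟨hndX, hpreX⟩ := ctxGood_of_derivable hcX
      rw [expr_comp hEu hlen, expr_comp hEu' hlen, sortE_comp hSU hlen]
      have hs1 := G1.1 X f ⟨hcX, hcY, hlenf, hterms⟩
      have hs2 := G2.1 X f ⟨hcX, hcY, hlenf, hterms⟩
      rw [expr_comp hEu hlen, sortE_comp hSU hlen] at hs1
      rw [expr_comp hEu' hlen, sortE_comp hSU hlen] at hs2
      refine derivable_step (.teqSub1 hax hpreX (by rw [compMor_length, hlen]) hJd hs1 hs2 ?_)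
      intro i hi hif
      have hia : i < a.length := hlen ▸ hi
      have hGt := (ih _ (hargs i hi hia)).1 X f ⟨hcX, hcY, hlenf, hterms⟩
      rw [subPre_comp hpreXa hlen Y f hi] at hGt
      simpa [compMor] using hGt
    | @teqSub2 Xa t V hax Y hY a b hlf hlg hJ h1 h2 hargs =>
      have hpreXa : IsPreCtx Xa := hAx.wf_ctx _ hax
      have hJd : Derivable Ax (introTerm Xa t V) := ⟨n, hJ⟩
      have hFV : SSub V Xa := fv_term_sort hAx hJd
      have G1 := ih _ h1
      have G2 := ih _ h2
      intro X f hf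
      obtain ⟨hcX, hcY, hlenf, hterms⟩ := hf
      obtain ⟨hndX, hpreX⟩ := ctxGood_of_derivable hcX
      rw [expr_app_substL_compMor, expr_app_substL_compMor, sortE_comp hFV hlf]
      have hs1 := G1.1 X f ⟨hcX, hcY, hlenf, hterms⟩
      have hs2 := G2.1 X f ⟨hcX, hcY, hlenf, hterms⟩
      rw [expr_app_substL_compMor, sortE_comp hFV hlf] at hs1
      rw [expr_app_substL_compMor, sortE_comp hFV hlf] at hs2
      refine derivable_step (.teqSub2 hax hpreX (by rw [compMor_length, hlf])
        (by rw [compMor_length, hlg]) hJd hs1 hs2 ?_)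
      intro i hi hif hig
      have hia : i < a.length := hlf ▸ hi
      have hib : i < b.length := hlg ▸ hi
      have hGt := (ih _ (hargs i hi hia hib)) X f ⟨hcX, hcY, hlenf, hterms⟩
      rw [subPre_comp hpreXa hlf Y f hi] at hGt
      simpa [compMor] using hGt

end MainThm

section Final
variable {Ax : Set (Judg A)}

theorem subPre_take {Z : PreCtx A} {f : List (Expr A)} {i j : ℕ} (hij : j < i)
    (hj : j < (Z.take i).length) (hj' : j < Z.length) :
    subPre (Z.take i) (f.take i) j hj = subPre Z f j hj' := by
  unfold subPre
  rw [List.take_take, List.take_take, min_eq_left hij.le]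
  congr 2
  simp [List.getElem_take]

theorem morEq_take {X Y : PreCtx A} {f g : List (Expr A)} (hfg : MorEq Ax X Y f g)
    {i : ℕ} (hi : i < Y.length) :
    MorEq Ax X (Y.take i) (f.take i) (g.take i) := by
  obtain ⟨⟨hcX, hcY, hlenf, htf⟩, ⟨-, -, hleng, htg⟩, heq⟩ := hfg
  have hctxi : Derivable Ax (.ctx (Y.take i)) := (ctx_prefix hcY i hi).1
  have hlf : (f.take i).length = (Y.take i).length := by
    simp only [List.length_take]; omega
  have hlg : (g.take i).length = (Y.take i).length := by
    simp only [List.length_take]; omega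
  have hYt : (Y.take i).length = i := by simp only [List.length_take]; omega
  refine ⟨⟨hcX, hctxi, hlf, ?_⟩, ⟨hcX, hctxi, hlg, ?_⟩, ?_⟩
  · intro j hj hjf
    have hj' : j < Y.length := by omega
    have hjf' : j < f.length := by omega
    have := htf j hj' hjf'
    rw [← subPre_take (i := i) (by omega) hj hj'] at this
    simpa [List.getElem_take] using this
  · intro j hj hjg
    have hj' : j < Y.length := by omega
    have hjg' : j < g.length := by omega
    have := htg j hj' hjg'
    rw [← subPre_take (i := i) (by omega) hj hj'] at this
    simpa [List.getElem_take] using this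
  · intro j hj hjf hjg
    have hj' : j < Y.length := by omega
    have hjf' : j < f.length := by omega
    have hjg' : j < g.length := by omega
    have := heq j hj' hjf' hjg'
    rw [← subPre_take (i := i) (by omega) hj hj'] at this
    simpa [List.getElem_take] using this

end Final


/-- In a pretheory, if the morphism equality `f ≡ g : X → Y`
is derivable then: (1) `X ⊢ Yᵢ[f] ≡ Yᵢ[g] sort` is derivable for each `i`;
(2) `f` and `g` are context morphisms `X → Y`; (3) if `Y ⊢ U sort` is derivable
then so is `X ⊢ U[f] ≡ U[g] sort`; (4) if `Y ⊢ u : U` is derivable then so is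
`X ⊢ u[f] ≡ u[g] : U[f]`; (5) if `h : Y → Z` is a context morphism then
`h∘f ≡ h∘g : X → Z` is derivable. -/
theorem morphism_equality_properties (A : Alphabet) (Ax : Set (Judg A))
    (hAx : IsPretheory Ax) (X Y : PreCtx A) (f g : List (Expr A))
    (hfg : MorEq Ax X Y f g) :
    (∀ i (hi : i < Y.length),
        Derivable Ax (.sortEq X ((Y[i]'hi).2.substL (mkSub Y f))
          ((Y[i]'hi).2.substL (mkSub Y g)))) ∧
    IsMor Ax X Y f ∧ IsMor Ax X Y g ∧
    (∀ U : SortE A, Derivable Ax (.sort Y U) →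
        Derivable Ax (.sortEq X (U.substL (mkSub Y f)) (U.substL (mkSub Y g)))) ∧
    (∀ (u : Expr A) (U : SortE A), Derivable Ax (.term Y u U) →
        Derivable Ax (.termEq X (u.substL (mkSub Y f)) (u.substL (mkSub Y g))
          (U.substL (mkSub Y f)))) ∧
    (∀ (Z : PreCtx A) (k : List (Expr A)), IsMor Ax Y Z k →
        MorEq Ax X Z (compMor Y f k) (compMor Y g k)) := by
  have hcX := hfg.1.1
  have hcY := hfg.1.2.1
  have hlenf := hfg.1.2.2.1
  have hleng := hfg.2.1.2.2.1
  obtain ⟨hndY, hpreY⟩ := ctxGood_of_derivable hcY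
  refine ⟨?_, hfg.1, hfg.2.1, ?_, ?_, ?_⟩
  · -- (1)
    intro i hi
    obtain ⟨m, hm⟩ := (ctx_prefix hcY i hi).2
    have hQ := (goodAt hAx m _ hm).2 X (f.take i) (g.take i) (morEq_take hfg hi)
    rw [substL_eq_subPre hpreY hlenf hi, substL_eq_subPre hpreY hleng hi]
    exact hQ
  · -- (3)
    intro U hU
    obtain ⟨m, hm⟩ := hU
    exact (goodAt hAx m _ hm).2 X f g hfg
  · -- (4)
    intro u U hu
    obtain ⟨m, hm⟩ := hu
    exact (goodAt hAx m _ hm).2 X f g hfg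
  · -- (5)
    intro Z k hk
    obtain ⟨hcY', hcZ, hlenk, hkterms⟩ := hk
    obtain ⟨hndZ, hpreZ⟩ := ctxGood_of_derivable hcZ
    refine ⟨⟨hcX, hcZ, by rw [compMor_length, hlenk], ?_⟩,
      ⟨hcX, hcZ, by rw [compMor_length, hlenk], ?_⟩, ?_⟩
    · intro i hi hif
      have hik : i < k.length := hlenk ▸ hi
      obtain ⟨m, hm⟩ := hkterms i hi hik
      have hP := (goodAt hAx m _ hm).1 X f hfg.1
      rw [subPre_comp hpreZ hlenk Y f hi] at hP
      simpa [compMor] using hP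
    · intro i hi hig
      have hik : i < k.length := hlenk ▸ hi
      obtain ⟨m, hm⟩ := hkterms i hi hik
      have hP := (goodAt hAx m _ hm).1 X g hfg.2.1
      rw [subPre_comp hpreZ hlenk Y g hi] at hP
      simpa [compMor] using hP
    · intro i hi hif hig
      have hik : i < k.length := hlenk ▸ hi
      obtain ⟨m, hm⟩ := hkterms i hi hik
      have hQ := (goodAt hAx m _ hm).2 X f g hfg
      rw [subPre_comp hpreZ hlenk Y f hi] at hQ
      simpa [compMor] using hQ

end GATPaper
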